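/- Let k be a field of characteristic 2, G a finite group, and V a finite-dimensional irreducible kG-module of dimension greater than 1 that is isomorphic to its dual module V*. Then the dimension of V over k is even. -/

import Mathlib

open LinearMap Module

theorem aux_alt_nondeg_even (K : Type*) [Field K] :
    ∀ (n : ℕ) (V : Type*) [AddCommGroup V] [Module K V] [FiniteDimensional K V]
      (B : LinearMap.BilinForm K V), Module.finrank K V = n → B.IsAlt → B.Nondegenerate →
      Even n := by
  intro n
  induction n using Nat.strong_induction_on with
  | _ n ih =>
    intro V _ _ _ B hn halt hnd
    rcases Nat.eq_zero_or_pos n with h0 | hpos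
    · simp [h0]
    -- pick v ≠ 0
    obtain ⟨v, hv⟩ : ∃ v : V, v ≠ 0 := by
      by_contra h
      push_neg at h
      have : Module.finrank K V = 0 := by
        have : (⊤ : Submodule K V) = ⊥ := by
          ext x; simp [h x]
        rw [← finrank_top, this, finrank_bot]
      omega
    obtain ⟨w, hw⟩ : ∃ w : V, B v w ≠ 0 := by
      by_contra h
      push_neg at h
      exact hv (hnd.1 v h)
    have hvv : B v v = 0 := halt v
    have hww : B w w = 0 := halt w
    have hwv : B w v = -B v w := (LinearMap.IsAlt.neg halt v w).symm
    have hli : LinearIndependent K ![v, w] := by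
      rw [LinearIndependent.pair_iff]
      intro s t hst
      have h1 : B (s • v + t • w) v = 0 := by rw [hst]; simp
      have h2 : B (s • v + t • w) w = 0 := by rw [hst]; simp
      simp only [map_add, map_smul, LinearMap.add_apply, LinearMap.smul_apply,
        smul_eq_mul, hvv, hww, hwv, mul_zero, zero_add, add_zero] at h1 h2
      have ht : t = 0 := by
        rcases mul_eq_zero.mp h1 with h | h
        · exact h
        · exact absurd (neg_eq_zero.mp h) hw
      have hs : s = 0 := by
        rcases mul_eq_zero.mp h2 with h | h
        · exact h
        · exact absurd h hw
      exact ⟨hs, ht⟩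
    set W : Submodule K V := Submodule.span K (Set.range ![v, w]) with hW
    have hvW : v ∈ W := Submodule.subset_span ⟨0, rfl⟩
    have hwW : w ∈ W := Submodule.subset_span ⟨1, rfl⟩
    have hWrank : Module.finrank K W = 2 := by
      rw [finrank_span_eq_card hli]
      simp
    have hrefl : B.IsRefl := halt.isRefl
    have hrestrict : (B.restrict W).Nondegenerate := by
      apply LinearMap.BilinForm.Nondegenerate.ofSeparatingLeft
      intro ⟨x, hx⟩ hxz
      have hx1 : B x v = 0 := hxz ⟨v, hvW⟩
      have hx2 : B x w = 0 := hxz ⟨w, hwW⟩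
      -- x ∈ span {v, w}
      have : x ∈ Submodule.span K {v, w} := by
        have : Set.range ![v, w] = {v, w} := by
          ext x
          simp [Fin.exists_fin_two, eq_comm, or_comm]
        rwa [hW, this] at hx
      obtain ⟨a, b, hab⟩ := Submodule.mem_span_pair.mp this
      have ha : a = 0 := by
        have := hx2
        rw [← hab] at this
        simp only [map_add, map_smul, LinearMap.add_apply, LinearMap.smul_apply,
          smul_eq_mul, hww, mul_zero, add_zero] at this
        rcases mul_eq_zero.mp this with h | h
        · exact h
        · exact absurd h hw
      have hb : b = 0 := by
        have := hx1
        rw [← hab] at this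
        simp only [map_add, map_smul, LinearMap.add_apply, LinearMap.smul_apply,
          smul_eq_mul, hvv, hwv, mul_zero, zero_add] at this
        rcases mul_eq_zero.mp this with h | h
        · exact h
        · exact absurd (neg_eq_zero.mp h) hw
      ext
      simp [← hab, ha, hb]
    have hcompl : IsCompl W (B.orthogonal W) :=
      BilinForm.isCompl_orthogonal_of_restrict_nondegenerate hrefl hrestrict
    set U := B.orthogonal W with hU
    have hrankadd : Module.finrank K W + Module.finrank K U = Module.finrank K V :=
      Submodule.finrank_add_eq_of_isCompl hcompl
    have haltU : (B.restrict U).IsAlt := fun x => halt x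
    have hndU : (B.restrict U).Nondegenerate := by
      apply LinearMap.BilinForm.Nondegenerate.ofSeparatingLeft
      intro ⟨x, hx⟩ hxz
      have hxall : ∀ y : V, B x y = 0 := by
        intro y
        obtain ⟨y1, hy1, y2, hy2, rfl⟩ : ∃ y1 ∈ W, ∃ y2 ∈ U, y1 + y2 = y := by
          have : y ∈ W ⊔ U := by rw [hcompl.sup_eq_top]; trivial
          exact Submodule.mem_sup.mp this
        have h1 : B x y1 = 0 := hrefl _ _ (hx y1 hy1)
        have h2 : B x y2 = 0 := hxz ⟨y2, hy2⟩
        simp [h1, h2]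
      have : x = 0 := hnd.1 x hxall
      ext; simp [this]
    have hUrank : Module.finrank K U = n - 2 := by omega
    have h2le : 2 ≤ n := by
      have := Submodule.finrank_le W
      omega
    have hevenU : Even (n - 2) := ih (n - 2) (by omega) U (B.restrict U) hUrank haltU hndU
    obtain ⟨m, hm⟩ := hevenU
    exact ⟨m + 1, by omega⟩

theorem stmt_9 (k : Type*) [Field k] [CharP k 2] (G : Type*) [Group G] [Finite G]
    (V : Type*) [AddCommGroup V] [Module k V] [FiniteDimensional k V]
    (ρ : Representation k G V)
    (hirr : ∀ W : Submodule k V, (∀ g : G, W.map (ρ g) ≤ W) → W = ⊥ ∨ W = ⊤)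
    (hdim : 1 < Module.finrank k V)
    (e : V ≃ₗ[k] Module.Dual k V)
    (he : ∀ (g : G) (v : V), e (ρ g v) = ρ.dual g (e v)) :
    Even (Module.finrank k V) := by
  classical
  set B : LinearMap.BilinForm k V := e.toLinearMap with hBdef
  have hgg : ∀ (g : G) (w : V), ρ g⁻¹ (ρ g w) = w := by
    intro g w
    rw [← Module.End.mul_apply, ← map_mul, inv_mul_cancel, map_one, Module.End.one_apply]
  have hBinv : ∀ (g : G) (v w : V), B (ρ g v) (ρ g w) = B v w := by
    intro g v w
    have h1 : B (ρ g v) (ρ g w) = (e (ρ g v)) (ρ g w) := rfl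
    rw [h1, he]
    show (e v) (ρ g⁻¹ (ρ g w)) = B v w
    rw [hgg]
    rfl
  have hBnd : B.Nondegenerate := by
    apply LinearMap.BilinForm.Nondegenerate.ofSeparatingLeft
    intro v h
    have : e v = 0 := LinearMap.ext h
    exact e.map_eq_zero_iff.mp this
  have hchar : ∀ x : k, x + x = 0 := fun x => CharTwo.add_self_eq_zero x
  set S : LinearMap.BilinForm k V := B + B.flip with hSdef
  have hSapp : ∀ v w, S v w = B v w + B w v := fun v w => rfl
  have hSalt : S.IsAlt := fun x => by rw [hSapp]; exact hchar _
  have hSinv : ∀ (g : G) (v w : V), S (ρ g v) (ρ g w) = S v w := by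
    intro g v w
    rw [hSapp, hSapp, hBinv, hBinv]
  by_cases hS0 : S = 0
  · -- B is symmetric
    have hsymm : ∀ v w, B w v = B v w := by
      intro v w
      have : S v w = 0 := by rw [hS0]; rfl
      rw [hSapp] at this
      have := eq_neg_of_add_eq_zero_right this
      rw [this, ← neg_one_smul k (B v w), ← sub_eq_zero]
      have hneg : (-1 : k) = 1 := CharTwo.neg_eq 1
      rw [hneg, one_smul, sub_self]
    set W0 : Submodule k V :=
      { carrier := {v | B v v = 0}
        add_mem' := by
          intro a b ha hb
          simp only [Set.mem_setOf_eq] at *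
          have : B (a + b) (a + b) = B a a + B b b + (B a b + B b a) := by
            simp only [map_add, LinearMap.add_apply]
            ring
          rw [this, ha, hb, hsymm a b]
          simp [hchar]
        zero_mem' := by simp
        smul_mem' := by
          intro c x hx
          simp only [Set.mem_setOf_eq] at *
          simp [hx] } with hW0def
    have hW0mem : ∀ v, v ∈ W0 ↔ B v v = 0 := fun v => Iff.rfl
    have hW0inv : ∀ g : G, W0.map (ρ g) ≤ W0 := by
      intro g x hx
      obtain ⟨v, hv, rfl⟩ := hx
      rw [hW0mem] at *
      rw [hBinv]
      exact hv
    rcases hirr W0 hW0inv with hbot | htop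
    · -- trivial representation, contradiction with hdim
      have htriv : ∀ (g : G) (v : V), ρ g v = v := by
        intro g v
        have hmem : ρ g v + v ∈ W0 := by
          rw [hW0mem]
          have : B (ρ g v + v) (ρ g v + v)
              = B (ρ g v) (ρ g v) + B v v + (B (ρ g v) v + B v (ρ g v)) := by
            simp only [map_add, LinearMap.add_apply]
            ring
          rw [this, hBinv, hsymm (ρ g v) v]
          simp [hchar]
        rw [hbot, Submodule.mem_bot] at hmem
        have : ρ g v = -v := eq_neg_of_add_eq_zero_left hmem
        rw [this, ← neg_one_smul k v]
        have hneg : (-1 : k) = 1 := CharTwo.neg_eq 1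
        rw [hneg, one_smul]
      have : Nontrivial V := by
        apply Module.nontrivial_of_finrank_pos (R := k)
        omega
      obtain ⟨v0, hv0⟩ := exists_ne (0 : V)
      have hinv : ∀ g : G, (Submodule.span k {v0}).map (ρ g) ≤ Submodule.span k {v0} := by
        intro g x hx
        obtain ⟨u, hu, rfl⟩ := hx
        rw [htriv g u]
        exact hu
      rcases hirr _ hinv with h | h
      · exact absurd (h ▸ Submodule.mem_span_singleton_self v0) (by simp [hv0])
      · have h1 : Module.finrank k (Submodule.span k {v0}) = 1 :=
          finrank_span_singleton hv0
        rw [h, finrank_top] at h1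
        omega
    · -- B is alternating
      have halt : B.IsAlt := by
        intro x
        have : x ∈ W0 := htop ▸ Submodule.mem_top
        exact (hW0mem x).mp this
      exact aux_alt_nondeg_even k (Module.finrank k V) V B rfl halt hBnd
  · -- S is a nonzero invariant alternating form
    set R : Submodule k V := LinearMap.ker S with hRdef
    have hRinv : ∀ g : G, R.map (ρ g) ≤ R := by
      intro g x hx
      obtain ⟨v, hv, rfl⟩ := hx
      rw [LinearMap.mem_ker] at *
      ext w
      have : S (ρ g v) w = S (ρ g v) (ρ g (ρ g⁻¹ w)) := by
        congr 1
        rw [← Module.End.mul_apply, ← map_mul, mul_inv_cancel, map_one, Module.End.one_apply]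
      rw [LinearMap.zero_apply, this, hSinv, hv]
      rfl
    rcases hirr R hRinv with hbot | htop
    · have hSnd : S.Nondegenerate := by
        apply LinearMap.BilinForm.Nondegenerate.ofSeparatingLeft
        intro v h
        have : v ∈ R := LinearMap.mem_ker.mpr (LinearMap.ext h)
        rwa [hbot, Submodule.mem_bot] at this
      exact aux_alt_nondeg_even k (Module.finrank k V) V S rfl hSalt hSnd
    · exfalso
      apply hS0
      ext v w
      have : v ∈ R := htop ▸ Submodule.mem_top
      rw [LinearMap.mem_ker] at this
      rw [this]
      rfl
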